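/- Let A = {0, 1, …, s-1} with s ≥ 2 and let H : C_A → C_A be a non-uniform cellular automaton with fixed radius r. Then H is number-conserving (NC) if and only if H is number-conserving on finite configurations (FNC), i.e., H(0̄) = 0̄ together with the convergence to 1 of μ_n(H(x))/μ_n(x) for every x ≠ 0̄ holds if and only if μ(H(x)) = μ(x) for every finite configuration x. -/

import Mathlib

open Filter

section Stmt8Aux

variable {s : ℕ} [NeZero s] {r : ℕ} {H : (ℤ → Fin s) → (ℤ → Fin s)}

lemma stmt8_loc
    (hH : ∀ i : ℤ, ∃ f : (Fin (2 * r + 1) → Fin s) → Fin s,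
      ∀ x : ℤ → Fin s, H x i = f (fun k => x (i - (r : ℤ) + (k : ℕ))))
    (x y : ℤ → Fin s) (i : ℤ)
    (h : ∀ j : ℤ, i - r ≤ j → j ≤ i + r → x j = y j) : H x i = H y i := by
  obtain ⟨f, hf⟩ := hH i
  rw [hf, hf]
  congr 1
  funext k
  have hk : (k : ℕ) < 2 * r + 1 := k.isLt
  exact h _ (by omega) (by omega)

lemma stmt8_supp
    (hH : ∀ i : ℤ, ∃ f : (Fin (2 * r + 1) → Fin s) → Fin s,
      ∀ x : ℤ → Fin s, H x i = f (fun k => x (i - (r : ℤ) + (k : ℕ))))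
    (hH0 : H 0 = 0) (x : ℤ → Fin s) (m : ℕ)
    (hx : ∀ j : ℤ, m < j.natAbs → x j = 0) :
    ∀ i : ℤ, m + r < i.natAbs → H x i = 0 := by
  intro i hi
  have h : H x i = H 0 i := by
    apply stmt8_loc hH
    intro j h1 h2
    simpa using hx j (by omega)
  rw [h, hH0]
  rfl

lemma stmt8_summable (f : ℤ → ℕ∞) : Summable f :=
  ⟨_, tendsto_atTop_iSup (Finset.sum_mono_set f)⟩

lemma stmt8_tsum (f : ℤ → Fin s) (m : ℕ) (h : ∀ i : ℤ, m < i.natAbs → f i = 0) :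
    ∑' i : ℤ, ((f i : ℕ) : ℕ∞)
      = ((∑ i ∈ Finset.Icc (-(m : ℤ)) (m : ℤ), (f i : ℕ) : ℕ) : ℕ∞) := by
  rw [tsum_eq_sum (s := Finset.Icc (-(m : ℤ)) (m : ℤ)) ?_, Nat.cast_sum]
  intro i hi
  simp only [Finset.mem_Icc, not_and_or, not_le] at hi
  simp [h i (by omega)]

lemma stmt8_const (f : ℤ → Fin s) (n₀ n : ℕ) (hn : n₀ ≤ n)
    (h : ∀ i : ℤ, n₀ < i.natAbs → f i = 0) :
    ∑ i ∈ Finset.Icc (-(n : ℤ)) (n : ℤ), (f i : ℕ)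
      = ∑ i ∈ Finset.Icc (-(n₀ : ℤ)) (n₀ : ℤ), (f i : ℕ) := by
  symm
  apply Finset.sum_subset
  · exact Finset.Icc_subset_Icc (by omega) (by omega)
  · intro i hmem hnot
    simp only [Finset.mem_Icc, not_and_or, not_le] at hmem hnot
    rw [h i (by omega)]
    rfl

lemma stmt8_split (f : ℤ → Fin s) (a b : ℕ) (hab : a ≤ b) :
    ∑ i ∈ Finset.Icc (-(b : ℤ)) (b : ℤ), (f i : ℕ)
      ≤ (∑ i ∈ Finset.Icc (-(a : ℤ)) (a : ℤ), (f i : ℕ)) + 2 * (b - a) * (s - 1) := by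
  have hsub : Finset.Icc (-(a : ℤ)) (a : ℤ) ⊆ Finset.Icc (-(b : ℤ)) (b : ℤ) :=
    Finset.Icc_subset_Icc (by omega) (by omega)
  have h1 : ∑ i ∈ Finset.Icc (-(b : ℤ)) (b : ℤ) \ Finset.Icc (-(a : ℤ)) (a : ℤ), (f i : ℕ)
      ≤ (Finset.Icc (-(b : ℤ)) (b : ℤ) \ Finset.Icc (-(a : ℤ)) (a : ℤ)).card * (s - 1) := by
    have := Finset.sum_le_card_nsmul
      (Finset.Icc (-(b : ℤ)) (b : ℤ) \ Finset.Icc (-(a : ℤ)) (a : ℤ))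
      (fun i => (f i : ℕ)) (s - 1)
      (fun i _ => by show ((f i : ℕ)) ≤ s - 1; have := (f i).isLt; omega)
    simpa using this
  have hcard : (Finset.Icc (-(b : ℤ)) (b : ℤ) \ Finset.Icc (-(a : ℤ)) (a : ℤ)).card
      = 2 * (b - a) := by
    rw [Finset.card_sdiff_of_subset hsub, Int.card_Icc, Int.card_Icc]
    omega
  rw [hcard] at h1
  have h2 := Finset.sum_sdiff (f := fun i => (f i : ℕ)) hsub
  calc ∑ i ∈ Finset.Icc (-(b : ℤ)) (b : ℤ), (f i : ℕ)
      = (∑ i ∈ Finset.Icc (-(b : ℤ)) (b : ℤ) \ Finset.Icc (-(a : ℤ)) (a : ℤ), (f i : ℕ))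
          + ∑ i ∈ Finset.Icc (-(a : ℤ)) (a : ℤ), (f i : ℕ) := h2.symm
    _ ≤ 2 * (b - a) * (s - 1) + ∑ i ∈ Finset.Icc (-(a : ℤ)) (a : ℤ), (f i : ℕ) :=
        Nat.add_le_add_right h1 _
    _ = _ := Nat.add_comm _ _

lemma stmt8_val_zero {a : Fin s} (h : (a : ℕ) = 0) : a = 0 :=
  Fin.val_injective (by simpa using h)

lemma stmt8_val_one {a : Fin s} (ha : a ≠ 0) : 1 ≤ (a : ℕ) := by
  rcases Nat.eq_zero_or_pos (a : ℕ) with h | h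
  · exact absurd (stmt8_val_zero h) ha
  · exact h

lemma stmt8_cast (f : ℤ → Fin s) (k : ℕ) :
    (∑ i ∈ Finset.Icc (-(k : ℤ)) (k : ℤ), ((f i : ℕ) : ℝ))
      = ((∑ i ∈ Finset.Icc (-(k : ℤ)) (k : ℤ), (f i : ℕ) : ℕ) : ℝ) := by
  push_cast
  rfl

lemma stmt8_ratio (f g : ℕ → ℕ) (C : ℕ)
    (hg : Tendsto (fun n => (g n : ℝ)) atTop atTop)
    (hb : ∀ᶠ n in atTop, f n ≤ g n + C ∧ g n ≤ f n + C) :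
    Tendsto (fun n => (f n : ℝ) / (g n : ℝ)) atTop (nhds 1) := by
  have hC : Tendsto (fun n => (C : ℝ) / (g n : ℝ)) atTop (nhds 0) :=
    Tendsto.div_atTop tendsto_const_nhds hg
  have hzero : Tendsto (fun n => (f n : ℝ) / (g n : ℝ) - 1) atTop (nhds 0) := by
    apply squeeze_zero_norm' ?_ hC
    filter_upwards [hb, hg.eventually_ge_atTop 1] with n hbn hg1
    obtain ⟨hu, hl⟩ := hbn
    have hgpos : (0 : ℝ) < (g n : ℝ) := by linarith
    have huR : (f n : ℝ) ≤ (g n : ℝ) + C := by exact_mod_cast hu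
    have hlR : (g n : ℝ) ≤ (f n : ℝ) + C := by exact_mod_cast hl
    have heq : (f n : ℝ) / (g n : ℝ) - 1 = ((f n : ℝ) - g n) / g n := by
      field_simp
    rw [Real.norm_eq_abs, heq, abs_div, abs_of_pos hgpos]
    have habs : |(f n : ℝ) - g n| ≤ C := by
      rw [abs_sub_le_iff]; constructor <;> linarith
    gcongr
  have h1 := hzero.add (tendsto_const_nhds (x := (1 : ℝ)))
  simpa using h1

end Stmt8Aux

/-- For a non-uniform cellular automaton `H` with fixed radius `r` on
the alphabet `A = {0, …, s-1}`, `H` is number-conserving (NC) iff it is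
number-conserving on finite configurations (FNC). NC means `H(0̄) = 0̄` and the
ratios `μ_n(H(x))/μ_n(x)` converge to 1 for every `x ≠ 0̄`; FNC means the global
charge `μ(x) = Σ_i x_i` (in `ℕ∞`) is preserved on every finite configuration. -/
theorem stmt8 (s : ℕ) [NeZero s] (hs : 2 ≤ s) (r : ℕ)
    (H : (ℤ → Fin s) → (ℤ → Fin s))
    (hH : ∀ i : ℤ, ∃ f : (Fin (2 * r + 1) → Fin s) → Fin s,
      ∀ x : ℤ → Fin s, H x i = f (fun k => x (i - (r : ℤ) + (k : ℕ)))) :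
    (H 0 = 0 ∧ ∀ x : ℤ → Fin s, x ≠ 0 →
        Tendsto (fun n : ℕ =>
            ((∑ i ∈ Finset.Icc (-(n : ℤ)) (n : ℤ), ((H x i : ℕ))) : ℝ) /
            ((∑ i ∈ Finset.Icc (-(n : ℤ)) (n : ℤ), ((x i : ℕ))) : ℝ))
          atTop (nhds 1))
    ↔ (∀ x : ℤ → Fin s, {i : ℤ | x i ≠ 0}.Finite →
        (∑' i : ℤ, ((H x i : ℕ) : ℕ∞)) = ∑' i : ℤ, ((x i : ℕ) : ℕ∞)) := by
  constructor
  · rintro ⟨hH0, htend⟩ x hfin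
    by_cases hx0 : x = 0
    · subst hx0
      rw [hH0]
    · obtain ⟨m, hm⟩ : ∃ m : ℕ, ∀ i : ℤ, m < i.natAbs → x i = 0 := by
        refine ⟨hfin.toFinset.sup Int.natAbs, fun i hi => ?_⟩
        by_contra h
        have hiT : i ∈ hfin.toFinset := hfin.mem_toFinset.2 h
        have := Finset.le_sup (f := Int.natAbs) hiT
        omega
      have hxsupp : ∀ i : ℤ, m + r < i.natAbs → x i = 0 := fun i hi => hm i (by omega)
      have hHsupp : ∀ i : ℤ, m + r < i.natAbs → H x i = 0 := stmt8_supp hH hH0 x m hm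
      have hM : 0 < ∑ i ∈ Finset.Icc (-((m + r : ℕ) : ℤ)) ((m + r : ℕ) : ℤ), (x i : ℕ) := by
        obtain ⟨i, hi⟩ : ∃ i, x i ≠ 0 := by
          by_contra h; push_neg at h; exact hx0 (funext h)
        have hile : i.natAbs ≤ m + r := by
          by_contra h; exact hi (hxsupp i (by omega))
        have him : i ∈ Finset.Icc (-((m + r : ℕ) : ℤ)) ((m + r : ℕ) : ℤ) := by
          simp only [Finset.mem_Icc]; omega
        calc 0 < (x i : ℕ) := stmt8_val_one hi
          _ ≤ _ := Finset.single_le_sum (f := fun i => (x i : ℕ))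
              (fun _ _ => Nat.zero_le _) him
      have h1 : ((∑ i ∈ Finset.Icc (-((m + r : ℕ) : ℤ)) ((m + r : ℕ) : ℤ), ((H x i : ℕ))) : ℝ) /
          ((∑ i ∈ Finset.Icc (-((m + r : ℕ) : ℤ)) ((m + r : ℕ) : ℤ), ((x i : ℕ))) : ℝ) = 1 := by
        apply tendsto_nhds_unique ?_ (htend x hx0)
        apply Tendsto.congr' ?_ tendsto_const_nhds
        filter_upwards [eventually_ge_atTop (m + r)] with n hn
        rw [stmt8_cast (H x) n, stmt8_cast x n, stmt8_cast (H x) (m + r), stmt8_cast x (m + r),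
          stmt8_const (H x) (m + r) n hn hHsupp, stmt8_const x (m + r) n hn hxsupp]
      have hM' : (∑ i ∈ Finset.Icc (-((m + r : ℕ) : ℤ)) ((m + r : ℕ) : ℤ), ((x i : ℕ) : ℝ))
          ≠ 0 := by
        rw [stmt8_cast]
        exact_mod_cast hM.ne'
      rw [div_eq_one_iff_eq hM'] at h1
      rw [stmt8_cast (H x) (m + r), stmt8_cast x (m + r)] at h1
      have hNM : (∑ i ∈ Finset.Icc (-((m + r : ℕ) : ℤ)) ((m + r : ℕ) : ℤ), ((H x i : ℕ)))
          = ∑ i ∈ Finset.Icc (-((m + r : ℕ) : ℤ)) ((m + r : ℕ) : ℤ), ((x i : ℕ)) := by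
        exact_mod_cast h1
      rw [stmt8_tsum (H x) (m + r) hHsupp, stmt8_tsum x (m + r) hxsupp, hNM]
  · intro FNC
    have hH0 : H 0 = 0 := by
      funext i
      have h0 : {i : ℤ | (0 : ℤ → Fin s) i ≠ 0}.Finite := by simp
      have hz := FNC 0 h0
      have hz0 : ∑' i : ℤ, (((0 : ℤ → Fin s) i : ℕ) : ℕ∞) = 0 := by simp
      rw [hz0] at hz
      have hzi := (stmt8_summable _).tsum_eq_zero_iff.1 hz i
      have hv : ((H 0 i : ℕ)) = 0 := by exact_mod_cast hzi
      exact stmt8_val_zero hv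
    refine ⟨hH0, ?_⟩
    intro x hx0
    by_cases hfin : {i : ℤ | x i ≠ 0}.Finite
    · obtain ⟨m, hm⟩ : ∃ m : ℕ, ∀ i : ℤ, m < i.natAbs → x i = 0 := by
        refine ⟨hfin.toFinset.sup Int.natAbs, fun i hi => ?_⟩
        by_contra h
        have hiT : i ∈ hfin.toFinset := hfin.mem_toFinset.2 h
        have := Finset.le_sup (f := Int.natAbs) hiT
        omega
      have hxsupp : ∀ i : ℤ, m + r < i.natAbs → x i = 0 := fun i hi => hm i (by omega)
      have hHsupp : ∀ i : ℤ, m + r < i.natAbs → H x i = 0 := stmt8_supp hH hH0 x m hm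
      have hFNC := FNC x hfin
      rw [stmt8_tsum (H x) (m + r) hHsupp, stmt8_tsum x (m + r) hxsupp] at hFNC
      have hNM : (∑ i ∈ Finset.Icc (-((m + r : ℕ) : ℤ)) ((m + r : ℕ) : ℤ), ((H x i : ℕ)))
          = ∑ i ∈ Finset.Icc (-((m + r : ℕ) : ℤ)) ((m + r : ℕ) : ℤ), ((x i : ℕ)) := by
        exact_mod_cast hFNC
      have hM : 0 < ∑ i ∈ Finset.Icc (-((m + r : ℕ) : ℤ)) ((m + r : ℕ) : ℤ), (x i : ℕ) := by
        obtain ⟨i, hi⟩ : ∃ i, x i ≠ 0 := by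
          by_contra h; push_neg at h; exact hx0 (funext h)
        have hile : i.natAbs ≤ m + r := by
          by_contra h; exact hi (hxsupp i (by omega))
        have him : i ∈ Finset.Icc (-((m + r : ℕ) : ℤ)) ((m + r : ℕ) : ℤ) := by
          simp only [Finset.mem_Icc]; omega
        calc 0 < (x i : ℕ) := stmt8_val_one hi
          _ ≤ _ := Finset.single_le_sum (f := fun i => (x i : ℕ))
              (fun _ _ => Nat.zero_le _) him
      apply Tendsto.congr' ?_ (tendsto_const_nhds (x := (1 : ℝ)))
      filter_upwards [eventually_ge_atTop (m + r)] with n hn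
      rw [stmt8_cast (H x) n, stmt8_cast x n,
        stmt8_const (H x) (m + r) n hn hHsupp, stmt8_const x (m + r) n hn hxsupp, hNM]
      exact (div_self (by exact_mod_cast hM.ne')).symm
    · -- infinite support
      have hgtop : Tendsto (fun n : ℕ => ∑ i ∈ Finset.Icc (-(n : ℤ)) (n : ℤ), (x i : ℕ))
          atTop atTop := by
        apply tendsto_atTop_atTop_of_monotone
        · intro a b hab
          exact Finset.sum_le_sum_of_subset (Finset.Icc_subset_Icc (by omega) (by omega))
        · intro B
          obtain ⟨T, hTsub, hTcard⟩ := Set.Infinite.exists_subset_card_eq hfin B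
          refine ⟨T.sup Int.natAbs, ?_⟩
          have hsub : T ⊆ Finset.Icc (-((T.sup Int.natAbs : ℕ) : ℤ)) ((T.sup Int.natAbs : ℕ) : ℤ) := by
            intro i hi
            have := Finset.le_sup (f := Int.natAbs) hi
            simp only [Finset.mem_Icc]
            omega
          calc B = ∑ _i ∈ T, 1 := by simp [hTcard]
            _ ≤ ∑ i ∈ T, (x i : ℕ) :=
                Finset.sum_le_sum (fun i hi => stmt8_val_one (hTsub hi))
            _ ≤ _ := Finset.sum_le_sum_of_subset hsub
      have hkey : ∀ n : ℕ, r ≤ n →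
          (∑ i ∈ Finset.Icc (-(n : ℤ)) (n : ℤ), ((H x i : ℕ)))
              ≤ (∑ i ∈ Finset.Icc (-(n : ℤ)) (n : ℤ), (x i : ℕ)) + 4 * r * (s - 1)
          ∧ (∑ i ∈ Finset.Icc (-(n : ℤ)) (n : ℤ), (x i : ℕ))
              ≤ (∑ i ∈ Finset.Icc (-(n : ℤ)) (n : ℤ), ((H x i : ℕ))) + 4 * r * (s - 1) := by
        intro n hn
        set y : ℤ → Fin s := fun i => if i ∈ Finset.Icc (-(n : ℤ)) (n : ℤ) then x i else 0
          with hy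
        have hysupp : ∀ i : ℤ, n < i.natAbs → y i = 0 := by
          intro i hi
          simp only [hy]
          rw [if_neg (by simp only [Finset.mem_Icc]; omega)]
        have hyfin : {i : ℤ | y i ≠ 0}.Finite := by
          apply Set.Finite.subset (Finset.Icc (-(n : ℤ)) (n : ℤ)).finite_toSet
          intro i hi
          by_contra h
          apply hi
          simp only [hy]
          exact if_neg (by simpa using h)
        have hyeqx : ∀ i ∈ Finset.Icc (-(n : ℤ)) (n : ℤ), y i = x i := by
          intro i hi
          simp only [hy]
          exact if_pos hi
        have hHy_eq : ∀ i : ℤ, (r : ℤ) - n ≤ i → i ≤ (n : ℤ) - r → H y i = H x i := by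
          intro i h1 h2
          apply stmt8_loc hH
          intro j hj1 hj2
          exact hyeqx j (by simp only [Finset.mem_Icc]; omega)
        have hHysupp : ∀ i : ℤ, n + r < i.natAbs → H y i = 0 := stmt8_supp hH hH0 y n hysupp
        have hFNC := FNC y hyfin
        rw [stmt8_tsum (H y) (n + r) hHysupp, stmt8_tsum y n hysupp] at hFNC
        have hGy : (∑ i ∈ Finset.Icc (-((n + r : ℕ) : ℤ)) ((n + r : ℕ) : ℤ), ((H y i : ℕ)))
            = ∑ i ∈ Finset.Icc (-(n : ℤ)) (n : ℤ), (y i : ℕ) := by exact_mod_cast hFNC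
        have hyx : (∑ i ∈ Finset.Icc (-(n : ℤ)) (n : ℤ), (y i : ℕ))
            = ∑ i ∈ Finset.Icc (-(n : ℤ)) (n : ℤ), (x i : ℕ) :=
          Finset.sum_congr rfl (fun i hi => by rw [hyeqx i hi])
        have hmid : (∑ i ∈ Finset.Icc (-((n - r : ℕ) : ℤ)) ((n - r : ℕ) : ℤ), ((H y i : ℕ)))
            = ∑ i ∈ Finset.Icc (-((n - r : ℕ) : ℤ)) ((n - r : ℕ) : ℤ), ((H x i : ℕ)) := by
          apply Finset.sum_congr rfl
          intro i hi
          simp only [Finset.mem_Icc] at hi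
          rw [hHy_eq i (by omega) (by omega)]
        constructor
        · have h1 := stmt8_split (H x) (n - r) n (by omega)
          rw [show n - (n - r) = r from by omega] at h1
          have h2 : (∑ i ∈ Finset.Icc (-((n - r : ℕ) : ℤ)) ((n - r : ℕ) : ℤ), ((H x i : ℕ)))
              ≤ ∑ i ∈ Finset.Icc (-((n + r : ℕ) : ℤ)) ((n + r : ℕ) : ℤ), ((H y i : ℕ)) := by
            rw [← hmid]
            exact Finset.sum_le_sum_of_subset (Finset.Icc_subset_Icc (by omega) (by omega))
          have h3 : 2 * r * (s - 1) ≤ 4 * r * (s - 1) :=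
            Nat.mul_le_mul_right _ (by omega)
          calc ∑ i ∈ Finset.Icc (-(n : ℤ)) (n : ℤ), ((H x i : ℕ))
              ≤ (∑ i ∈ Finset.Icc (-((n - r : ℕ) : ℤ)) ((n - r : ℕ) : ℤ), ((H x i : ℕ)))
                  + 2 * r * (s - 1) := h1
            _ ≤ (∑ i ∈ Finset.Icc (-((n + r : ℕ) : ℤ)) ((n + r : ℕ) : ℤ), ((H y i : ℕ)))
                  + 2 * r * (s - 1) := Nat.add_le_add_right h2 _
            _ = (∑ i ∈ Finset.Icc (-(n : ℤ)) (n : ℤ), (x i : ℕ)) + 2 * r * (s - 1) := by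
                  rw [hGy, hyx]
            _ ≤ _ := Nat.add_le_add_left h3 _
        · have h1 := stmt8_split (H y) (n - r) (n + r) (by omega)
          rw [show (n + r) - (n - r) = 2 * r from by omega] at h1
          have h2 : (∑ i ∈ Finset.Icc (-((n - r : ℕ) : ℤ)) ((n - r : ℕ) : ℤ), ((H x i : ℕ)))
              ≤ ∑ i ∈ Finset.Icc (-(n : ℤ)) (n : ℤ), ((H x i : ℕ)) :=
            Finset.sum_le_sum_of_subset (Finset.Icc_subset_Icc (by omega) (by omega))
          calc ∑ i ∈ Finset.Icc (-(n : ℤ)) (n : ℤ), (x i : ℕ)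
              = ∑ i ∈ Finset.Icc (-(n : ℤ)) (n : ℤ), (y i : ℕ) := hyx.symm
            _ = ∑ i ∈ Finset.Icc (-((n + r : ℕ) : ℤ)) ((n + r : ℕ) : ℤ), ((H y i : ℕ)) :=
                  hGy.symm
            _ ≤ (∑ i ∈ Finset.Icc (-((n - r : ℕ) : ℤ)) ((n - r : ℕ) : ℤ), ((H y i : ℕ)))
                  + 2 * (2 * r) * (s - 1) := h1
            _ = (∑ i ∈ Finset.Icc (-((n - r : ℕ) : ℤ)) ((n - r : ℕ) : ℤ), ((H x i : ℕ)))
                  + 2 * (2 * r) * (s - 1) := by rw [hmid]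
            _ ≤ (∑ i ∈ Finset.Icc (-(n : ℤ)) (n : ℤ), ((H x i : ℕ)))
                  + 2 * (2 * r) * (s - 1) := Nat.add_le_add_right h2 _
            _ = _ := by ring_nf
      have hmain := stmt8_ratio
        (fun n : ℕ => ∑ i ∈ Finset.Icc (-(n : ℤ)) (n : ℤ), ((H x i : ℕ)))
        (fun n : ℕ => ∑ i ∈ Finset.Icc (-(n : ℤ)) (n : ℤ), (x i : ℕ)) (4 * r * (s - 1))
        (tendsto_natCast_atTop_atTop.comp hgtop)
        (by filter_upwards [eventually_ge_atTop r] with n hn; exact hkey n hn)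
      apply hmain.congr
      intro n
      rw [stmt8_cast (H x) n, stmt8_cast x n]
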